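/- Let d ≥ 1 and ℓ ≥ 2 be integers, and set N = (d−1)ℓ + 2, r = gcd(d+1, ℓ−1), and t = gcd(d+1, 2(ℓ−1)). Then for every integer n, N divides n·r·(d−1) if and only if N divides n·t. -/

import Mathlib

/-- For integers `d ≥ 1`, `ℓ ≥ 2`, with `N = (d−1)ℓ + 2`,
`r = gcd(d+1, ℓ−1)` and `t = gcd(d+1, 2(ℓ−1))`, for every integer `n` one has
`N ∣ n·r·(d−1)` iff `N ∣ n·t`. -/
theorem dvd_gcd_iff_dvd_gcd (d ℓ : ℤ) (hd : 1 ≤ d) (hl : 2 ≤ ℓ)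
    (N r t : ℤ) (hN : N = (d - 1) * ℓ + 2)
    (hr : r = Int.gcd (d + 1) (ℓ - 1))
    (ht : t = Int.gcd (d + 1) (2 * (ℓ - 1))) :
    ∀ n : ℤ, N ∣ n * r * (d - 1) ↔ N ∣ n * t := by
  have hrl : r ∣ ℓ - 1 := by rw [hr]; exact Int.gcd_dvd_right _ _
  have htd : t ∣ d + 1 := by rw [ht]; exact Int.gcd_dvd_left _ _
  set g2 : ℤ := (Int.gcd (r * (d - 1)) N : ℤ) with hg2
  have hg2rd : g2 ∣ r * (d - 1) := Int.gcd_dvd_left _ _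
  have hg2N : g2 ∣ N := Int.gcd_dvd_right _ _
  have hg2ld : g2 ∣ (ℓ - 1) * (d - 1) := hg2rd.trans (mul_dvd_mul_right hrl _)
  have hg2d1 : g2 ∣ d + 1 := by
    have h : d + 1 = N - (ℓ - 1) * (d - 1) := by rw [hN]; ring
    rw [h]; exact dvd_sub hg2N hg2ld
  have hg2t : g2 ∣ t := by
    rw [ht]
    refine Int.dvd_coe_gcd hg2d1 ?_
    have h : 2 * (ℓ - 1) = (d + 1) * (ℓ - 1) - (ℓ - 1) * (d - 1) := by ring
    rw [h]
    exact dvd_sub (hg2d1.mul_right _) hg2ld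
  set g1 : ℤ := (Int.gcd t N : ℤ) with hg1
  have hg1t : g1 ∣ t := Int.gcd_dvd_left _ _
  have hg1N : g1 ∣ N := Int.gcd_dvd_right _ _
  have hg1d1 : g1 ∣ d + 1 := hg1t.trans htd
  have hg1ld : g1 ∣ (ℓ - 1) * (d - 1) := by
    have h : (ℓ - 1) * (d - 1) = N - (d + 1) := by rw [hN]; ring
    rw [h]; exact dvd_sub hg1N hg1d1
  have hrd1 : r * (d - 1) = (Int.gcd ((d + 1) * (d - 1)) ((ℓ - 1) * (d - 1)) : ℤ) := by
    rw [Int.gcd_mul_right, hr]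
    push_cast
    rw [abs_of_nonneg (by linarith : (0:ℤ) ≤ d - 1)]
  have hg1rd : g1 ∣ r * (d - 1) := by
    rw [hrd1]
    exact Int.dvd_coe_gcd (hg1d1.mul_right _) hg1ld
  intro n
  constructor
  · intro h
    obtain ⟨c, hc⟩ := hg2t
    have hbez : g2 = r * (d - 1) * Int.gcdA (r * (d - 1)) N + N * Int.gcdB (r * (d - 1)) N := by
      rw [hg2]; exact_mod_cast Int.gcd_eq_gcd_ab (r * (d - 1)) N
    have h' : N ∣ n * (r * (d - 1)) := by rwa [← mul_assoc]
    have heq : n * t = (n * (r * (d - 1))) * Int.gcdA (r * (d - 1)) N * c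
        + N * (n * Int.gcdB (r * (d - 1)) N * c) := by
      rw [hc, hbez]; ring
    rw [heq]
    exact dvd_add ((h'.mul_right _).mul_right _) (Dvd.intro _ rfl)
  · intro h
    obtain ⟨c, hc⟩ := hg1rd
    have hbez : g1 = t * Int.gcdA t N + N * Int.gcdB t N := by
      rw [hg1]; exact_mod_cast Int.gcd_eq_gcd_ab t N
    have heq : n * r * (d - 1) = (n * t) * Int.gcdA t N * c
        + N * (n * Int.gcdB t N * c) := by
      rw [mul_assoc, hc, hbez]; ring
    rw [heq]
    exact dvd_add ((h.mul_right _).mul_right _) (Dvd.intro _ rfl)
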